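/- For every μ ∈ (0,1), in each of the three open intervals (−∞, −μ), (−μ, 1−μ), and (1−μ, ∞) there exists exactly one real number x such that (x, 0) is a critical point of the effective potential U (i.e., U_x(x, 0) = 0; note U_y(x, 0) = 0 automatically). These are the three collinear Lagrange points L₁, L₂, L₃. -/

import Mathlib

open Set

private lemma cube_div_pos (c t : ℝ) (h : 0 < t) : c * t / |t|^3 = c / t^2 := by
  rw [abs_of_pos h]; field_simp [h.ne']

private lemma cube_div_neg (c t : ℝ) (h : t < 0) : c * t / |t|^3 = -(c / t^2) := by
  rw [abs_of_neg h]; field_simp [h.ne]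

private lemma hda (c d : ℝ) {a : ℝ} (h : a + d ≠ 0) :
    HasDerivAt (fun x => c / (x + d)^2) (-2 * c / (a + d)^3) a := by
  have h1 : HasDerivAt (fun x : ℝ => (x + d)^2) (2*(a+d)) a := by
    simpa using ((hasDerivAt_id a).add_const d).fun_pow 2
  have h2 : (a+d)^2 ≠ 0 := pow_ne_zero _ h
  have h3 := (hasDerivAt_const a c).fun_div h1 h2
  convert h3 using 1
  · rfl
  · rfl
  field_simp
  ring

private lemma hdaf (μ s₁ s₂ : ℝ) {a : ℝ} (h1 : a + μ ≠ 0) (h2 : a - 1 + μ ≠ 0) :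
    HasDerivAt (fun x => x + s₁*(1-μ)/(x+μ)^2 + s₂*μ/(x-1+μ)^2)
      (1 + (-2*(s₁*(1-μ))/(a+μ)^3) + (-2*(s₂*μ)/(a-1+μ)^3)) a := by
  have h2' : a + (μ - 1) ≠ 0 := by intro h; apply h2; linarith
  have A := hda (s₁*(1-μ)) μ h1
  have B := hda (s₂*μ) (μ-1) h2'
  have C := ((hasDerivAt_id a).fun_add A).fun_add B
  have hfun : (fun x => x + s₁*(1-μ)/(x+μ)^2 + s₂*μ/(x-1+μ)^2)
      = (fun x => id x + (fun y => s₁*(1-μ)/(y+μ)^2) x + (fun y => s₂*μ/(y+(μ-1))^2) x) := by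
    funext x; simp only [id]; ring_nf
  rw [hfun]
  convert C using 1
  · rfl
  · rfl
  ring_nf

private lemma exun_congr {S : Set ℝ} {f g : ℝ → ℝ} (h : ∀ a ∈ S, f a = g a)
    (H : ∃! a, a ∈ S ∧ f a = 0) : ∃! a, a ∈ S ∧ g a = 0 := by
  obtain ⟨c, ⟨hc, hfc⟩, hu⟩ := H
  exact ⟨c, ⟨hc, (h c hc).symm.trans hfc⟩,
    fun y ⟨hy, hgy⟩ => hu y ⟨hy, (h y hy).trans hgy⟩⟩

private lemma exun {f : ℝ → ℝ} {S : Set ℝ} (hmono : StrictMonoOn f S)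
    (hcont : ContinuousOn f S) {p q : ℝ}
    (hpq : p ≤ q) (hIcc : Icc p q ⊆ S) (hfp : f p < 0) (hfq : 0 < f q) :
    ∃! a, a ∈ S ∧ f a = 0 := by
  obtain ⟨c, hc, hfc⟩ := intermediate_value_Icc hpq (hcont.mono hIcc)
    ⟨le_of_lt hfp, le_of_lt hfq⟩
  exact ⟨c, ⟨hIcc hc, hfc⟩,
    fun y hy => hmono.injOn hy.1 (hIcc hc) (hy.2.trans hfc.symm)⟩

private lemma mono_key (μ s₁ s₂ : ℝ) (hμ0 : 0 < μ) (hμ1 : μ < 1) (S : Set ℝ)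
    (hS : Convex ℝ S) (hSi : interior S = S)
    (h₁ : ∀ a ∈ S, s₁ * (a + μ)^3 < 0)
    (h₂ : ∀ a ∈ S, s₂ * (a - 1 + μ)^3 < 0) :
    StrictMonoOn (fun a => a + s₁*(1-μ)/(a+μ)^2 + s₂*μ/(a-1+μ)^2) S ∧
    ContinuousOn (fun a => a + s₁*(1-μ)/(a+μ)^2 + s₂*μ/(a-1+μ)^2) S := by
  have hne1 : ∀ a ∈ S, a + μ ≠ 0 := by
    intro a ha h
    have := h₁ a ha
    rw [h, zero_pow (by norm_num), mul_zero] at this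
    exact lt_irrefl 0 this
  have hne2 : ∀ a ∈ S, a - 1 + μ ≠ 0 := by
    intro a ha h
    have := h₂ a ha
    rw [h, zero_pow (by norm_num), mul_zero] at this
    exact lt_irrefl 0 this
  have hder : ∀ a ∈ S, HasDerivAt (fun x => x + s₁*(1-μ)/(x+μ)^2 + s₂*μ/(x-1+μ)^2)
      (1 + (-2*(s₁*(1-μ))/(a+μ)^3) + (-2*(s₂*μ)/(a-1+μ)^3)) a :=
    fun a ha => hdaf μ s₁ s₂ (hne1 a ha) (hne2 a ha)
  have hcont : ContinuousOn (fun a => a + s₁*(1-μ)/(a+μ)^2 + s₂*μ/(a-1+μ)^2) S :=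
    fun a ha => (hder a ha).differentiableAt.continuousAt.continuousWithinAt
  have hpos : ∀ a ∈ S, 0 < 1 + (-2*(s₁*(1-μ))/(a+μ)^3) + (-2*(s₂*μ)/(a-1+μ)^3) := by
    intro a ha
    have e1 : s₁/(a+μ)^3 < 0 := by
      have h' : s₁/(a+μ)^3 = (s₁*(a+μ)^3)/((a+μ)^3)^2 := by
        rw [pow_two, mul_comm ((a+μ)^3), ← div_div, mul_div_assoc, div_self (pow_ne_zero 3 (hne1 a ha)), mul_one]
      rw [h']
      exact div_neg_of_neg_of_pos (h₁ a ha)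
        (pow_two_pos_of_ne_zero (pow_ne_zero 3 (hne1 a ha)))
    have e2 : s₂/(a-1+μ)^3 < 0 := by
      have h' : s₂/(a-1+μ)^3 = (s₂*(a-1+μ)^3)/((a-1+μ)^3)^2 := by
        rw [pow_two, mul_comm ((a-1+μ)^3), ← div_div, mul_div_assoc, div_self (pow_ne_zero 3 (hne2 a ha)), mul_one]
      rw [h']
      exact div_neg_of_neg_of_pos (h₂ a ha)
        (pow_two_pos_of_ne_zero (pow_ne_zero 3 (hne2 a ha)))
    have t1 : 0 < -2*(s₁*(1-μ))/(a+μ)^3 := by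
      have h' : -2*(s₁*(1-μ))/(a+μ)^3 = (2*(1-μ))*(-(s₁/(a+μ)^3)) := by ring
      rw [h']; exact mul_pos (by linarith) (neg_pos.mpr e1)
    have t2 : 0 < -2*(s₂*μ)/(a-1+μ)^3 := by
      have h' : -2*(s₂*μ)/(a-1+μ)^3 = (2*μ)*(-(s₂/(a-1+μ)^3)) := by ring
      rw [h']; exact mul_pos (by linarith) (neg_pos.mpr e2)
    linarith
  refine ⟨strictMonoOn_of_deriv_pos hS hcont ?_, hcont⟩
  intro x hx
  rw [hSi] at hx
  rw [(hder x hx).deriv]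
  exact hpos x hx

/-- For every μ ∈ (0,1), each of the three open intervals
(−∞,−μ), (−μ,1−μ), (1−μ,∞) contains exactly one real x with (x,0) a critical
point of the effective potential (U_x(x,0) = 0; U_y(x,0) = 0 holds automatically):
the collinear Lagrange points. -/
theorem stmt5 (μ : ℝ) (hμ : μ ∈ Set.Ioo (0:ℝ) 1)
    (r1 r2 : ℝ → ℝ → ℝ)
    (hr1def : ∀ a b, r1 a b = Real.sqrt ((a + μ)^2 + b^2))
    (hr2def : ∀ a b, r2 a b = Real.sqrt ((a - 1 + μ)^2 + b^2))
    (Ux Uy : ℝ → ℝ → ℝ)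
    (hUx : ∀ a b, Ux a b =
      a - (1 - μ) * (a + μ) / (r1 a b)^3 - μ * (a - 1 + μ) / (r2 a b)^3)
    (hUy : ∀ a b, Uy a b =
      b - (1 - μ) * b / (r1 a b)^3 - μ * b / (r2 a b)^3) :
    (∀ a : ℝ, Uy a 0 = 0) ∧
    (∃! a : ℝ, a ∈ Set.Iio (-μ) ∧ Ux a 0 = 0) ∧
    (∃! a : ℝ, a ∈ Set.Ioo (-μ) (1 - μ) ∧ Ux a 0 = 0) ∧
    (∃! a : ℝ, a ∈ Set.Ioi (1 - μ) ∧ Ux a 0 = 0) := by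
  obtain ⟨hμ0, hμ1⟩ := hμ
  have hr1 : ∀ a, r1 a 0 = |a + μ| := by
    intro a; rw [hr1def]; simp [Real.sqrt_sq_eq_abs]
  have hr2 : ∀ a, r2 a 0 = |a - 1 + μ| := by
    intro a; rw [hr2def]; simp [Real.sqrt_sq_eq_abs]
  have hne1μ : (1:ℝ) - μ ≠ 0 := ne_of_gt (by linarith)
  have h36a : (1-μ)/((1-μ)/36) = 36 := by
    rw [div_div_eq_mul_div, mul_comm (1-μ) 36, mul_div_assoc, div_self hne1μ, mul_one]
  have h36b : μ/(μ/36) = 36 := by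
    rw [div_div_eq_mul_div, mul_comm μ 36, mul_div_assoc, div_self (ne_of_gt hμ0), mul_one]
  obtain ⟨δ₁, hδ₁pos, hδ₁le, hδ₁sq⟩ :
      ∃ d : ℝ, 0 < d ∧ d ≤ 1/6 ∧ d^2 = (1-μ)/36 := by
    refine ⟨Real.sqrt (1-μ)/6, div_pos (Real.sqrt_pos.mpr (by linarith)) (by norm_num),
      ?_, ?_⟩
    · have := Real.sqrt_le_one.mpr (by linarith : (1:ℝ)-μ ≤ 1)
      linarith
    · rw [div_pow, Real.sq_sqrt (by linarith)]; norm_num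
  obtain ⟨δ₂, hδ₂pos, hδ₂le, hδ₂sq⟩ :
      ∃ d : ℝ, 0 < d ∧ d ≤ 1/6 ∧ d^2 = μ/36 := by
    refine ⟨Real.sqrt μ/6, div_pos (Real.sqrt_pos.mpr hμ0) (by norm_num), ?_, ?_⟩
    · have := Real.sqrt_le_one.mpr (by linarith : μ ≤ 1)
      linarith
    · rw [div_pow, Real.sq_sqrt (by linarith)]; norm_num
  refine ⟨fun a => by rw [hUy]; simp, ?_, ?_, ?_⟩
  -- Interval 1 : Iio (-μ), s₁ = 1, s₂ = 1
  · have hmono := mono_key μ 1 1 hμ0 hμ1 (Iio (-μ)) (convex_Iio _) interior_Iio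
      (by intro a ha
          have h1 : a + μ < 0 := by simp only [mem_Iio] at ha; linarith
          have := Odd.pow_neg (by decide : Odd 3) h1
          linarith)
      (by intro a ha
          have h1 : a - 1 + μ < 0 := by simp only [mem_Iio] at ha; linarith
          have := Odd.pow_neg (by decide : Odd 3) h1
          linarith)
    have heq : ∀ a ∈ Iio (-μ),
        (fun x => x + 1*(1-μ)/(x+μ)^2 + 1*μ/(x-1+μ)^2) a = Ux a 0 := by
      intro a ha
      have h1 : a + μ < 0 := by simp only [mem_Iio] at ha; linarith
      have h2 : a - 1 + μ < 0 := by linarith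
      simp only [hUx, hr1, hr2]
      rw [cube_div_neg _ _ h1, cube_div_neg _ _ h2]
      ring
    apply exun_congr heq
    refine exun hmono.1 hmono.2 (p := -2) (q := -μ - δ₁) (by linarith) ?_ ?_ ?_
    · intro x hx
      simp only [mem_Icc] at hx
      simp only [mem_Iio]
      linarith
    · simp only [one_mul]
      have hb1 : (1-μ)/(-2+μ)^2 ≤ 1-μ :=
        div_le_self (by linarith) (by nlinarith)
      have hb2 : μ/(-2-1+μ)^2 ≤ μ :=
        div_le_self (by linarith) (by nlinarith)
      linarith
    · simp only [one_mul]
      rw [show -μ - δ₁ + μ = -δ₁ from by ring,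
          show -μ - δ₁ - 1 + μ = -(1+δ₁) from by ring,
          show (-δ₁:ℝ)^2 = δ₁^2 from by ring,
          show (-(1+δ₁):ℝ)^2 = (1+δ₁)^2 from by ring,
          hδ₁sq, h36a]
      have hpos : 0 < μ/(1+δ₁)^2 := div_pos hμ0 (by nlinarith)
      linarith
  -- Interval 2 : Ioo (-μ) (1-μ), s₁ = -1, s₂ = 1
  · have hmono := mono_key μ (-1) 1 hμ0 hμ1 (Ioo (-μ) (1-μ)) (convex_Ioo _ _) interior_Ioo
      (by intro a ha
          obtain ⟨ha1, ha2⟩ := ha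
          have h1 : 0 < a + μ := by linarith
          have := pow_pos h1 3
          linarith)
      (by intro a ha
          obtain ⟨ha1, ha2⟩ := ha
          have h1 : a - 1 + μ < 0 := by linarith
          have := Odd.pow_neg (by decide : Odd 3) h1
          linarith)
    have heq : ∀ a ∈ Ioo (-μ) (1-μ),
        (fun x => x + (-1)*(1-μ)/(x+μ)^2 + 1*μ/(x-1+μ)^2) a = Ux a 0 := by
      intro a ha
      obtain ⟨ha1, ha2⟩ := ha
      have h1 : 0 < a + μ := by linarith
      have h2 : a - 1 + μ < 0 := by linarith
      simp only [hUx, hr1, hr2]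
      rw [cube_div_pos _ _ h1, cube_div_neg _ _ h2]
      ring
    apply exun_congr heq
    refine exun hmono.1 hmono.2 (p := -μ + δ₁) (q := 1 - μ - δ₂) (by linarith) ?_ ?_ ?_
    · intro x hx
      simp only [mem_Icc] at hx
      exact ⟨by linarith, by linarith⟩
    · simp only [one_mul, neg_one_mul, neg_div]
      rw [show -μ + δ₁ + μ = δ₁ from by ring,
          show -μ + δ₁ - 1 + μ = δ₁ - 1 from by ring,
          hδ₁sq, h36a]
      have hb : μ/(δ₁-1)^2 ≤ 2 := by
        rw [div_le_iff₀ (by nlinarith : (0:ℝ) < (δ₁-1)^2)]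
        nlinarith
      linarith
    · simp only [one_mul, neg_one_mul, neg_div]
      rw [show 1 - μ - δ₂ - 1 + μ = -δ₂ from by ring,
          show 1 - μ - δ₂ + μ = 1 - δ₂ from by ring,
          show (-δ₂:ℝ)^2 = δ₂^2 from by ring,
          hδ₂sq, h36b]
      have hb : (1-μ)/(1-δ₂)^2 ≤ 2 := by
        rw [div_le_iff₀ (by nlinarith : (0:ℝ) < (1-δ₂)^2)]
        nlinarith
      linarith
  -- Interval 3 : Ioi (1-μ), s₁ = -1, s₂ = -1
  · have hmono := mono_key μ (-1) (-1) hμ0 hμ1 (Ioi (1-μ)) (convex_Ioi _) interior_Ioi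
      (by intro a ha
          simp only [mem_Ioi] at ha
          have h1 : 0 < a + μ := by linarith
          have := pow_pos h1 3
          linarith)
      (by intro a ha
          simp only [mem_Ioi] at ha
          have h1 : 0 < a - 1 + μ := by linarith
          have := pow_pos h1 3
          linarith)
    have heq : ∀ a ∈ Ioi (1-μ),
        (fun x => x + (-1)*(1-μ)/(x+μ)^2 + (-1)*μ/(x-1+μ)^2) a = Ux a 0 := by
      intro a ha
      simp only [mem_Ioi] at ha
      have h1 : 0 < a + μ := by linarith
      have h2 : 0 < a - 1 + μ := by linarith
      simp only [hUx, hr1, hr2]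
      rw [cube_div_pos _ _ h1, cube_div_pos _ _ h2]
      ring
    apply exun_congr heq
    refine exun hmono.1 hmono.2 (p := 1 - μ + δ₂) (q := 2) (by linarith) ?_ ?_ ?_
    · intro x hx
      simp only [mem_Icc] at hx
      simp only [mem_Ioi]
      linarith
    · simp only [neg_one_mul, neg_div]
      rw [show 1 - μ + δ₂ - 1 + μ = δ₂ from by ring, hδ₂sq, h36b]
      have hb : 0 ≤ (1-μ)/(1 - μ + δ₂ + μ)^2 := div_nonneg (by linarith) (sq_nonneg _)
      linarith
    · simp only [neg_one_mul, neg_div]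
      have hb1 : (1-μ)/(2+μ)^2 ≤ 1-μ :=
        div_le_self (by linarith) (by nlinarith)
      have hb2 : μ/(2-1+μ)^2 ≤ μ :=
        div_le_self (by linarith) (by nlinarith)
      linarith
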